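/- If G is a group generated by a set S such that every element of G is a product of at most N elements of S, and every element of S is a commutator in G, then every homogeneous quasimorphism on G is identically zero. -/

import Mathlib

theorem stmt_19 {G : Type*} [Group G] (S : Set G) (N : ℕ)
    (hgen : ∀ g : G, ∃ l : List G, l.length ≤ N ∧ (∀ s ∈ l, s ∈ S) ∧ l.prod = g)
    (hcomm : ∀ s ∈ S, ∃ a b : G, s = a * b * a⁻¹ * b⁻¹)
    (φ : G → ℝ) (B : ℝ)
    (hq : ∀ x y : G, |φ (x * y) - φ x - φ y| ≤ B)
    (hhom : ∀ (g : G) (n : ℤ), φ (g ^ n) = n * φ g) :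
    ∀ g : G, φ g = 0 := by
  have h1 : φ 1 = 0 := by simpa using hhom 1 0
  have hB : 0 ≤ B := by
    have := hq 1 1
    simp [h1] at this
    linarith [this, abs_nonneg (φ (1*1))]
  have hinv : ∀ g : G, φ g⁻¹ = -φ g := by
    intro g
    have := hhom g (-1)
    simpa using this
  have hnat : ∀ (g : G) (n : ℕ), φ (g ^ n) = n * φ g := by
    intro g n
    have := hhom g (n : ℤ)
    rw [zpow_natCast] at this
    simpa using this
  have key : ∀ (c C : ℝ), (∀ n : ℕ, (n : ℝ) * |c| ≤ C) → c = 0 := by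
    intro c C h
    by_contra hc
    have hc' : 0 < |c| := abs_pos.mpr hc
    obtain ⟨n, hn⟩ := exists_nat_gt (C / |c|)
    have h2 := h n
    have : C / |c| ≥ (n : ℝ) := by
      rw [ge_iff_le, le_div_iff₀ hc']; linarith
    linarith
  have hconj : ∀ g x : G, φ (g * x * g⁻¹) = φ x := by
    intro g x
    have : φ (g * x * g⁻¹) - φ x = 0 := by
      apply key _ (2 * B)
      intro n
      have hpow : (g * x * g⁻¹) ^ n = g * x ^ n * g⁻¹ := by
        induction n with
        | zero => simp
        | succ k ih => rw [pow_succ, pow_succ, ih]; group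
      have e0 : φ ((g * x * g⁻¹) ^ n) = n * φ (g * x * g⁻¹) := hnat _ n
      have e3 : φ (x ^ n) = n * φ x := hnat _ n
      have e1 := hq (g * x ^ n) g⁻¹
      have e2 := hq g (x ^ n)
      rw [hpow] at e0
      rw [hinv g] at e1
      have : |(n : ℝ) * φ (g * x * g⁻¹) - (n : ℝ) * φ x| ≤ 2 * B := by
        rw [← e0, ← e3]
        calc |φ (g * x ^ n * g⁻¹) - φ (x ^ n)|
            = |(φ (g * x ^ n * g⁻¹) - φ (g * x ^ n) - (-φ g))
              + (φ (g * x ^ n) - φ g - φ (x ^ n))| := by congr 1; ring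
          _ ≤ |φ (g * x ^ n * g⁻¹) - φ (g * x ^ n) - (-φ g)|
              + |φ (g * x ^ n) - φ g - φ (x ^ n)| := abs_add_le _ _
          _ ≤ B + B := add_le_add e1 e2
          _ = 2 * B := by ring
      calc (n : ℝ) * |φ (g * x * g⁻¹) - φ x|
          = |(n : ℝ) * φ (g * x * g⁻¹) - (n : ℝ) * φ x| := by
            rw [← mul_sub, abs_mul, abs_of_nonneg (by positivity : (0:ℝ) ≤ (n:ℝ))]
        _ ≤ 2 * B := this
    linarith
  have hS : ∀ s ∈ S, |φ s| ≤ B := by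
    intro s hs
    obtain ⟨a, b, rfl⟩ := hcomm s hs
    have e := hq (a * b * a⁻¹) b⁻¹
    rw [hconj a b, hinv b] at e
    calc |φ (a * b * a⁻¹ * b⁻¹)| = |φ (a * b * a⁻¹ * b⁻¹) - φ b - (-φ b)| := by ring_nf
      _ ≤ B := e
  have hlist : ∀ l : List G, (∀ s ∈ l, s ∈ S) → |φ l.prod| ≤ 2 * l.length * B := by
    intro l
    induction l with
    | nil => intro _; simp [h1]
    | cons a t ih =>
      intro hmem
      have ha : |φ a| ≤ B := hS a (hmem a (by simp))
      have ht : |φ t.prod| ≤ 2 * t.length * B := ih (fun s hs => hmem s (by simp [hs]))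
      have e := hq a t.prod
      have : |φ (a * t.prod)| ≤ B + |φ a| + |φ t.prod| := by
        calc |φ (a * t.prod)| = |(φ (a * t.prod) - φ a - φ t.prod) + φ a + φ t.prod| := by
              ring_nf
          _ ≤ |φ (a * t.prod) - φ a - φ t.prod| + |φ a| + |φ t.prod| := by
              exact (abs_add_le _ _).trans (add_le_add_left (abs_add_le _ _) _)
          _ ≤ B + |φ a| + |φ t.prod| := by linarith
      simp only [List.prod_cons, List.length_cons]
      push_cast
      nlinarith
  intro g
  apply key _ (2 * N * B)
  intro n
  obtain ⟨l, hlen, hmem, hprod⟩ := hgen (g ^ n)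
  have := hlist l hmem
  rw [hprod] at this
  rw [hnat g n] at this
  rw [abs_mul, abs_of_nonneg (by positivity : (0:ℝ) ≤ (n:ℝ))] at this
  have hlen' : (l.length : ℝ) ≤ N := by exact_mod_cast hlen
  nlinarith
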